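/- For any vector d ∈ ℝⁿ, the convex hull of the set of its permutations, conv{Π d : Π ∈ Sym(n)} (the permutahedron of d), equals the set of vectors majorized by d: {x ∈ ℝⁿ : Σᵢ xᵢ = Σᵢ dᵢ and Σ_{i=1}^k (x̄)ᵢ ≤ Σ_{i=1}^k (d̄)ᵢ for all k = 1,…,n−1}, where x̄ denotes x sorted in descending order. -/

import Mathlib

/-- The entries of `x` sorted in descending order. -/
noncomputable def sortDesc {n : ℕ} (x : Fin n → ℝ) : Fin n → ℝ :=
  fun i => (x ∘ Tuple.sort x) i.rev

/-- The sum of the `k` largest entries of `x`. -/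
noncomputable def topSum {n : ℕ} (k : ℕ) (x : Fin n → ℝ) : ℝ :=
  ∑ i : Fin n, if (i : ℕ) < k then sortDesc x i else 0

namespace RadoAux

open Finset

variable {n : ℕ}

/-- The permutation realizing the descending sort. -/
noncomputable def sortPerm (x : Fin n → ℝ) : Equiv.Perm (Fin n) :=
  (Fin.revPerm).trans (Tuple.sort x)

lemma sortDesc_eq_comp (x : Fin n → ℝ) : sortDesc x = x ∘ (sortPerm x) := rfl

lemma antitone_sortDesc (x : Fin n → ℝ) : Antitone (sortDesc x) := by
  intro i j hij
  exact Tuple.monotone_sort x (Fin.rev_le_rev.2 hij)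

lemma sum_sortDesc (x : Fin n → ℝ) : ∑ i, sortDesc x i = ∑ i, x i := by
  rw [sortDesc_eq_comp]
  exact Equiv.sum_comp (sortPerm x) x

/-- ℕ-indexed extension of `sortDesc`. -/
noncomputable def sd (x : Fin n → ℝ) : ℕ → ℝ :=
  fun i => if h : i < n then sortDesc x ⟨i, h⟩ else 0

lemma sum_range_ite {M : Type*} [AddCommMonoid M] {k m : ℕ} (hk : k ≤ m) (f : ℕ → M) :
    ∑ i ∈ range m, (if i < k then f i else 0) = ∑ i ∈ range k, f i := by
  rw [← Finset.sum_filter]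
  congr 1
  ext a
  simp only [mem_filter, mem_range]
  omega

lemma topSum_eq_range {k : ℕ} (hk : k ≤ n) (x : Fin n → ℝ) :
    topSum k x = ∑ i ∈ range k, sd x i := by
  rw [topSum]
  have h1 : ∀ i : Fin n, (if (i : ℕ) < k then sortDesc x i else 0)
      = (fun m => if m < k then sd x m else 0) (i : ℕ) := by
    intro i
    simp [sd, i.isLt]
  rw [Finset.sum_congr rfl fun i _ => h1 i,
    Fin.sum_univ_eq_sum_range (fun m => if m < k then sd x m else 0) n,
    sum_range_ite hk]

lemma topSum_self (x : Fin n → ℝ) : topSum n x = ∑ i, x i := by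
  rw [← sum_sortDesc x, topSum]
  apply Finset.sum_congr rfl
  intro i _
  simp [i.isLt]

lemma sum_mem_le_topSum {k : ℕ} (hk : k ≤ n) (x : Fin n → ℝ) (A : Finset (Fin n))
    (hA : A.card = k) : ∑ i ∈ A, x i ≤ topSum k x := by
  -- rewrite the sum as a sum of sortDesc over a set of size k
  set σ := sortPerm x
  have hximg : ∑ i ∈ A, x i = ∑ i ∈ A.image σ.symm, sortDesc x i := by
    rw [Finset.sum_image (fun a _ b _ h => σ.symm.injective h)]
    apply Finset.sum_congr rfl
    intro i _
    rw [sortDesc_eq_comp x]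
    simp [σ]
  set B := A.image σ.symm with hB
  have hBcard : B.card = k := by
    rw [hB, Finset.card_image_of_injective _ σ.symm.injective, hA]
  rw [hximg]
  -- now bound the sum over B using antitonicity
  set e := B.orderEmbOfFin hBcard with he
  have hBim : B = Finset.image (fun j : Fin k => e j) Finset.univ := by
    ext a
    simp only [Finset.mem_image, Finset.mem_univ, true_and]
    constructor
    · intro ha
      have : a ∈ Set.range (B.orderEmbOfFin hBcard) := by
        rw [Finset.range_orderEmbOfFin]
        exact ha
      obtain ⟨j, hj⟩ := this
      exact ⟨j, hj⟩
    · rintro ⟨j, rfl⟩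
      have : e j ∈ Set.range (B.orderEmbOfFin hBcard) := ⟨j, rfl⟩
      rwa [Finset.range_orderEmbOfFin] at this
  have hle : ∀ m : ℕ, ∀ h : m < k, m ≤ (e ⟨m, h⟩ : Fin n) := by
    intro m
    induction m with
    | zero => intro h; exact Nat.zero_le _
    | succ p ih =>
      intro h
      have hp : p < k := Nat.lt_of_succ_lt h
      have h1 := ih hp
      have h2 : e ⟨p, hp⟩ < e ⟨p + 1, h⟩ := by
        apply e.strictMono
        simp [Fin.lt_def]
      rw [Fin.lt_def] at h2
      omega
  calc ∑ i ∈ B, sortDesc x i = ∑ j : Fin k, sortDesc x (e j) := by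
        rw [hBim, Finset.sum_image (fun a _ b _ h => e.injective h)]
    _ ≤ ∑ j : Fin k, sd x (j : ℕ) := by
        apply Finset.sum_le_sum
        intro j _
        have hj : (j : ℕ) < n := lt_of_lt_of_le j.isLt hk
        have : sd x (j : ℕ) = sortDesc x ⟨(j : ℕ), hj⟩ := by simp [sd, hj]
        rw [this]
        apply antitone_sortDesc
        rw [Fin.le_def]
        exact hle (j : ℕ) j.isLt
    _ = ∑ i ∈ range k, sd x i := Fin.sum_univ_eq_sum_range (sd x) k
    _ = topSum k x := (topSum_eq_range hk x).symm

lemma exists_topSum {k : ℕ} (hk : k ≤ n) (x : Fin n → ℝ) :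
    ∃ A : Finset (Fin n), A.card = k ∧ ∑ i ∈ A, x i = topSum k x := by
  set σ := sortPerm x
  set F := Finset.univ.filter (fun i : Fin n => (i : ℕ) < k) with hF
  have hFcard : F.card = k := by
    rw [hF, Finset.card_filter]
    rw [Fin.sum_univ_eq_sum_range (fun m => if m < k then 1 else 0) n, sum_range_ite hk]
    simp
  refine ⟨F.image σ, ?_, ?_⟩
  · rw [Finset.card_image_of_injective _ σ.injective, hFcard]
  · rw [Finset.sum_image (fun a _ b _ h => σ.injective h)]
    rw [topSum, ← Finset.sum_filter]
    apply Finset.sum_congr rfl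
    intro i _
    rw [sortDesc_eq_comp x]
    rfl

lemma topSum_comp_perm_le {k : ℕ} (hk : k ≤ n) (x : Fin n → ℝ) (σ : Equiv.Perm (Fin n)) :
    topSum k (x ∘ σ) ≤ topSum k x := by
  obtain ⟨A, hA, hsum⟩ := exists_topSum hk (x ∘ σ)
  rw [← hsum]
  have h1 : ∑ i ∈ A, (x ∘ σ) i = ∑ i ∈ A.image σ, x i := by
    rw [Finset.sum_image (fun a _ b _ h => σ.injective h)]
    rfl
  rw [h1]
  exact sum_mem_le_topSum hk x _ (by rw [Finset.card_image_of_injective _ σ.injective, hA])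

lemma topSum_comp_perm {k : ℕ} (hk : k ≤ n) (x : Fin n → ℝ) (σ : Equiv.Perm (Fin n)) :
    topSum k (x ∘ σ) = topSum k x := by
  refine le_antisymm (topSum_comp_perm_le hk x σ) ?_
  have := topSum_comp_perm_le hk (x ∘ σ) σ.symm
  have h2 : (x ∘ σ) ∘ σ.symm = x := by
    funext i; simp
  rwa [h2] at this

/-- The key inequality: if `x` is majorized by `d`, then for any linear functional `c`,
`⟨c, x⟩ ≤ ⟨c, d ∘ σ⟩` for some permutation `σ`. -/
lemma key_ineq (d x : Fin n → ℝ) (hsum : ∑ i, x i = ∑ i, d i)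
    (hmaj : ∀ k : ℕ, 1 ≤ k → k ≤ n - 1 → topSum k x ≤ topSum k d) (c : Fin n → ℝ) :
    ∃ σ : Equiv.Perm (Fin n), ∑ i, c i * x i ≤ ∑ i, c i * (d ∘ σ) i := by
  refine ⟨(sortPerm c).symm.trans (sortPerm d), ?_⟩
  -- Step 1 (rearrangement): ∑ c x ≤ ∑ (sortDesc c) (sortDesc x)
  have hmono : Monovary (sortDesc c) (sortDesc x) := by
    intro i j hij
    have hji : j ≤ i := by
      by_contra h
      push_neg at h
      exact absurd (antitone_sortDesc x h.le) (not_le.2 hij)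
    exact antitone_sortDesc c hji
  have step1 : ∑ i, c i * x i ≤ ∑ i, sortDesc c i * sortDesc x i := by
    have h := hmono.sum_smul_comp_perm_le_sum_smul
      (σ := (sortPerm c).trans (sortPerm x).symm)
    simp only [smul_eq_mul] at h
    calc ∑ i, c i * x i
        = ∑ i, (fun j => c j * x j) ((sortPerm c) i) :=
          (Equiv.sum_comp (sortPerm c) (fun j => c j * x j)).symm
      _ = ∑ i, sortDesc c i * sortDesc x (((sortPerm c).trans (sortPerm x).symm) i) := by
          apply Finset.sum_congr rfl
          intro i _
          rw [sortDesc_eq_comp c, sortDesc_eq_comp x]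
          simp [Equiv.trans_apply]
      _ ≤ ∑ i, sortDesc c i * sortDesc x i := h
  -- Step 2 (Abel summation): ∑ (sortDesc c) (sortDesc x) ≤ ∑ (sortDesc c) (sortDesc d)
  have step2 : ∑ i, sortDesc c i * sortDesc x i ≤ ∑ i, sortDesc c i * sortDesc d i := by
    set u : ℕ → ℝ := sd c with hu
    set w : ℕ → ℝ := fun i => sd x i - sd d i with hw
    have habel := Finset.sum_range_by_parts u w n
    have hWn : ∑ j ∈ range n, w j = 0 := by
      simp only [hw, Finset.sum_sub_distrib]
      rw [← topSum_eq_range le_rfl x, ← topSum_eq_range le_rfl d, topSum_self, topSum_self, hsum]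
      ring
    have hterm : ∀ i ∈ range (n - 1), 0 ≤ (u (i + 1) - u i) • ∑ j ∈ range (i + 1), w j := by
      intro i hi
      rw [Finset.mem_range] at hi
      have hi1 : i + 1 ≤ n - 1 := hi
      have hin : i + 1 < n := by omega
      have hW : ∑ j ∈ range (i + 1), w j ≤ 0 := by
        simp only [hw, Finset.sum_sub_distrib]
        rw [← topSum_eq_range (by omega) x, ← topSum_eq_range (by omega) d]
        have := hmaj (i + 1) (by omega) hi1
        linarith
      have hu' : u (i + 1) - u i ≤ 0 := by
        have h1 : u (i + 1) = sortDesc c ⟨i + 1, hin⟩ := by simp [hu, sd, hin]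
        have h2 : u i = sortDesc c ⟨i, by omega⟩ := by simp [hu, sd, (by omega : i < n)]
        rw [h1, h2, sub_nonpos]
        apply antitone_sortDesc
        simp [Fin.le_def]
      rw [smul_eq_mul]
      nlinarith [hu', hW]
    have hsum_le : ∑ i ∈ range n, u i • w i ≤ 0 := by
      rw [habel, hWn, smul_zero, zero_sub, neg_nonpos]
      exact Finset.sum_nonneg hterm
    have hfin : ∑ i, sortDesc c i * sortDesc x i - ∑ i, sortDesc c i * sortDesc d i
        = ∑ i ∈ range n, u i • w i := by
      rw [← Finset.sum_sub_distrib]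
      have : ∀ i : Fin n, sortDesc c i * sortDesc x i - sortDesc c i * sortDesc d i
          = (fun m => u m • w m) (i : ℕ) := by
        intro i
        simp [hu, hw, sd, i.isLt, smul_eq_mul]
        ring
      rw [Finset.sum_congr rfl fun i _ => this i,
        Fin.sum_univ_eq_sum_range (fun m => u m • w m) n]
    linarith [hsum_le, hfin.symm.le, hfin.le]
  -- Step 3: ∑ (sortDesc c) (sortDesc d) = ∑ c (d ∘ σ)
  have step3 : ∑ i, sortDesc c i * sortDesc d i
      = ∑ i, c i * (d ∘ ((sortPerm c).symm.trans (sortPerm d))) i := by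
    have := Equiv.sum_comp (sortPerm c)
      (fun j => c j * (d ∘ ((sortPerm c).symm.trans (sortPerm d))) j)
    rw [← this]
    apply Finset.sum_congr rfl
    intro i _
    rw [sortDesc_eq_comp c, sortDesc_eq_comp d]
    simp [Equiv.trans_apply]
  linarith

end RadoAux

open RadoAux in
theorem stmt13 (n : ℕ) (d : Fin n → ℝ) :
    convexHull ℝ {x : Fin n → ℝ | ∃ σ : Equiv.Perm (Fin n), x = d ∘ σ} =
      {x : Fin n → ℝ | (∑ i, x i = ∑ i, d i) ∧
        ∀ k : ℕ, 1 ≤ k → k ≤ n - 1 → topSum k x ≤ topSum k d} := by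
  set S : Set (Fin n → ℝ) := {x | ∃ σ : Equiv.Perm (Fin n), x = d ∘ σ} with hS
  apply Set.Subset.antisymm
  · -- easy direction: convex hull ⊆ majorized set
    apply convexHull_min
    · rintro _ ⟨σ, rfl⟩
      refine ⟨Equiv.sum_comp σ d, fun k hk1 hk2 => ?_⟩
      exact le_of_eq (topSum_comp_perm (le_trans hk2 (Nat.sub_le n 1)) d σ)
    · rintro x hx y hy a b ha hb hab
      refine ⟨?_, fun k hk1 hk2 => ?_⟩
      · have : ∑ i, (a • x + b • y) i = a * ∑ i, x i + b * ∑ i, y i := by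
          simp [Finset.sum_add_distrib, Finset.mul_sum]
        rw [this, hx.1, hy.1, ← add_mul, hab, one_mul]
      · have hkn : k ≤ n := le_trans hk2 (Nat.sub_le n 1)
        obtain ⟨A, hA, hAs⟩ := exists_topSum hkn (a • x + b • y)
        rw [← hAs]
        have h1 : ∑ i ∈ A, (a • x + b • y) i = a * ∑ i ∈ A, x i + b * ∑ i ∈ A, y i := by
          simp [Finset.sum_add_distrib, Finset.mul_sum]
        rw [h1]
        have h2 : a * ∑ i ∈ A, x i ≤ a * topSum k x :=
          mul_le_mul_of_nonneg_left (sum_mem_le_topSum hkn x A hA) ha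
        have h3 : b * ∑ i ∈ A, y i ≤ b * topSum k y :=
          mul_le_mul_of_nonneg_left (sum_mem_le_topSum hkn y A hA) hb
        have h4 := hx.2 k hk1 hk2
        have h5 := hy.2 k hk1 hk2
        have h6 : a * topSum k x ≤ a * topSum k d := mul_le_mul_of_nonneg_left h4 ha
        have h7 : b * topSum k y ≤ b * topSum k d := mul_le_mul_of_nonneg_left h5 hb
        have h8 : a * topSum k d + b * topSum k d = topSum k d := by
          rw [← add_mul, hab, one_mul]
        linarith
  · -- hard direction: majorized set ⊆ convex hull
    intro x hx
    by_contra hxh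
    have hSfin : S.Finite := by
      have : S = Set.range (fun σ : Equiv.Perm (Fin n) => d ∘ σ) := by
        ext y
        simp [hS, Set.range, eq_comm]
      rw [this]
      exact Set.finite_range _
    have hclosed : IsClosed (convexHull ℝ S) := (hSfin.isCompact_convexHull ℝ).isClosed
    obtain ⟨f, u, hfu, hux⟩ :=
      geometric_hahn_banach_closed_point (convex_convexHull ℝ S) hclosed hxh
    set c : Fin n → ℝ := fun i => f (fun j => if i = j then 1 else 0) with hc
    have hfy : ∀ y : Fin n → ℝ, f y = ∑ i, c i * y i := by
      intro y
      have := LinearMap.pi_apply_eq_sum_univ (f : (Fin n → ℝ) →ₗ[ℝ] ℝ) y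
      simp only [ContinuousLinearMap.coe_coe] at this
      rw [this]
      apply Finset.sum_congr rfl
      intro i _
      rw [hc, smul_eq_mul, mul_comm]
    obtain ⟨σ, hσ⟩ := key_ineq d x hx.1 hx.2 c
    have h1 : f x ≤ f (d ∘ σ) := by
      rw [hfy, hfy]
      exact hσ
    have h2 : f (d ∘ σ) < u := hfu _ (subset_convexHull ℝ S ⟨σ, rfl⟩)
    linarith
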